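/- Let d ≥ 1, let c ≥ d be a real number, define v(x) = 1 − |x|² and b(x) = −c x/|x|² for x ≠ 0. Then: (i) for every x ∈ B_1 with x ≠ 0, Δv(x) + b(x)·∇v(x) = −2d + 2c ≥ 0; (ii) v = 0 on ∂B_1 and v(0) = 1 > 0. Consequently, for L = Δ + b·D, the negative part (Lv)_− vanishes on B_1 \ {0}, so for every constant N and every p ∈ [1,∞) the Aleksandrov-type inequality v(x) ≤ sup_{∂B_1} v + N (∫_{B_1} ((Lv(y))_−)^p dy)^{1/p} fails at x = 0. -/

import Mathlib

open MeasureTheory Metric RealInnerProductSpace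

section Aux

variable {E : Type*} [NormedAddCommGroup E] [InnerProductSpace ℝ E] [CompleteSpace E]

omit [CompleteSpace E] in
lemma aux_hasFDerivAt_v (x : E) :
    HasFDerivAt (fun x : E => 1 - ‖x‖ ^ 2) ((-2 : ℝ) • (innerSL ℝ x : E →L[ℝ] ℝ)) x := by
  have h : HasFDerivAt (fun x : E => (1 : ℝ) - ⟪x, x⟫)
      ((-2 : ℝ) • (innerSL ℝ x : E →L[ℝ] ℝ)) x := by
    have h1 := ((hasFDerivAt_id x).inner ℝ (hasFDerivAt_id x)).const_sub (1 : ℝ)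
    refine h1.congr_fderiv ?_
    ext y
    simp [fderivInnerCLM_apply, real_inner_comm]
    ring
  convert h using 2 with y
  rw [real_inner_self_eq_norm_sq]

omit [CompleteSpace E] in
lemma aux_fderiv_v :
    (fderiv ℝ (fun x : E => 1 - ‖x‖ ^ 2)) =
      ⇑((-2 : ℝ) • (innerSL ℝ : E →L[ℝ] E →L[ℝ] ℝ)) := by
  funext x
  exact (aux_hasFDerivAt_v x).fderiv

omit [CompleteSpace E] in
lemma aux_second_deriv (y e : E) :
    fderiv ℝ (fderiv ℝ (fun x : E => 1 - ‖x‖ ^ 2)) y e e = -2 * ‖e‖ ^ 2 := by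
  rw [aux_fderiv_v, ContinuousLinearMap.fderiv]
  simp [real_inner_self_eq_norm_sq]
  exact real_inner_self_eq_norm_sq e

lemma aux_gradient_v (y : E) :
    gradient (fun x : E => 1 - ‖x‖ ^ 2) y = (-2 : ℝ) • y := by
  refine HasGradientAt.gradient ?_
  rw [hasGradientAt_iff_hasFDerivAt]
  convert aux_hasFDerivAt_v y using 1
  ext z
  simp [InnerProductSpace.toDual_apply_apply, real_inner_smul_left]
  ext z
  simp [InnerProductSpace.toDual_apply_apply, real_inner_smul_left]

end Aux

/-- counterexample of Remark 1.1. For `v(x) = 1 - |x|²`,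
`b(x) = -c x/|x|²` with `c ≥ d`, and `Lv = Δv + b·∇v`, one has
`Lv = -2d + 2c ≥ 0` on `B_1 \ {0}`, `v = 0` on `∂B_1`, `v(0) = 1 > 0`,
`(Lv)_-` vanishes on `B_1 \ {0}`, and the Aleksandrov-type inequality
fails at `x = 0` for every `N` and every `p ∈ [1,∞)`. -/
theorem aleksandrov_fails_without_smallness (d : ℕ) (hd : 1 ≤ d) (c : ℝ)
    (hc : (d : ℝ) ≤ c)
    (v : EuclideanSpace ℝ (Fin d) → ℝ) (hv : v = fun x => 1 - ‖x‖ ^ 2)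
    (b : EuclideanSpace ℝ (Fin d) → EuclideanSpace ℝ (Fin d))
    (hb : ∀ y : EuclideanSpace ℝ (Fin d), y ≠ 0 → b y = -((c / ‖y‖ ^ 2) • y))
    (Lv : EuclideanSpace ℝ (Fin d) → ℝ)
    (hLv : Lv = fun y =>
      (∑ i : Fin d, iteratedFDeriv ℝ 2 v y
        ![EuclideanSpace.single i 1, EuclideanSpace.single i 1]) +
      ⟪b y, gradient v y⟫) :
    (∀ x ∈ ball (0 : EuclideanSpace ℝ (Fin d)) 1, x ≠ 0 →
        Lv x = -2 * d + 2 * c ∧ (0 : ℝ) ≤ -2 * d + 2 * c) ∧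
    (∀ x ∈ sphere (0 : EuclideanSpace ℝ (Fin d)) 1, v x = 0) ∧
    (v 0 = 1 ∧ (0 : ℝ) < 1) ∧
    (∀ x ∈ ball (0 : EuclideanSpace ℝ (Fin d)) 1 \ {0}, max (-(Lv x)) 0 = 0) ∧
    (∀ N p : ℝ, 1 ≤ p →
      ¬ (v 0 ≤ sSup (v '' sphere (0 : EuclideanSpace ℝ (Fin d)) 1) +
          N * (∫ y in ball (0 : EuclideanSpace ℝ (Fin d)) 1,
            (max (-(Lv y)) 0) ^ p) ^ (1 / p))) := by
  haveI : Nonempty (Fin d) := ⟨⟨0, hd⟩⟩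
  -- main computation of Lv
  have hLv' : ∀ x : EuclideanSpace ℝ (Fin d), x ≠ 0 → Lv x = -2 * d + 2 * c := by
    intro x hx
    have h2 : ∀ i : Fin d, iteratedFDeriv ℝ 2 v x
        ![EuclideanSpace.single i 1, EuclideanSpace.single i 1] = -2 := by
      intro i
      rw [iteratedFDeriv_two_apply, hv]
      show fderiv ℝ (fderiv ℝ (fun x => 1 - ‖x‖ ^ 2)) x (EuclideanSpace.single i 1)
          (EuclideanSpace.single i 1) = -2
      rw [aux_second_deriv]
      simp
    have hnx : ‖x‖ ^ 2 ≠ 0 := by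
      simpa using hx
    have hgrad : gradient v x = (-2 : ℝ) • x := by rw [hv]; exact aux_gradient_v x
    rw [hLv]
    simp only [h2, Finset.sum_const, Finset.card_univ, Fintype.card_fin, nsmul_eq_mul]
    rw [hgrad, hb x hx]
    rw [inner_smul_right, inner_neg_left, real_inner_smul_left,
      real_inner_self_eq_norm_sq]
    field_simp
  have hnonneg : (0 : ℝ) ≤ -2 * d + 2 * c := by linarith
  have hsphere : ∀ x ∈ sphere (0 : EuclideanSpace ℝ (Fin d)) 1, v x = 0 := by
    intro x hx
    rw [mem_sphere_iff_norm, sub_zero] at hx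
    rw [hv]; simp [hx]
  have hv0 : v 0 = 1 := by rw [hv]; simp
  have hmax : ∀ x ∈ ball (0 : EuclideanSpace ℝ (Fin d)) 1 \ {0},
      max (-(Lv x)) 0 = 0 := by
    intro x hx
    rw [hLv' x hx.2]
    rw [max_eq_right (by linarith)]
  refine ⟨fun x _ hx0 => ⟨hLv' x hx0, hnonneg⟩, hsphere, ⟨hv0, one_pos⟩, hmax, ?_⟩
  intro N p hp hle
  -- sSup of image on sphere is 0
  have hsne : (sphere (0 : EuclideanSpace ℝ (Fin d)) 1).Nonempty :=
    NormedSpace.sphere_nonempty.2 zero_le_one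
  have himg : v '' sphere (0 : EuclideanSpace ℝ (Fin d)) 1 = {0} := by
    apply Set.eq_singleton_iff_nonempty_unique_mem.2
    refine ⟨hsne.image v, ?_⟩
    rintro y ⟨x, hx, rfl⟩
    exact hsphere x hx
  -- the integral is 0
  have hint : (∫ y in ball (0 : EuclideanSpace ℝ (Fin d)) 1,
      (max (-(Lv y)) 0) ^ p) = 0 := by
    apply integral_eq_zero_of_ae
    have h0 : ∀ᵐ y : EuclideanSpace ℝ (Fin d) ∂volume, y ≠ (0 : EuclideanSpace ℝ (Fin d)) := by
      rw [ae_iff]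
      simp only [not_not]
      have : {y : EuclideanSpace ℝ (Fin d) | y = 0} = {0} := by ext; simp
      rw [this]
      exact measure_singleton 0
    filter_upwards [ae_restrict_mem measurableSet_ball, ae_restrict_of_ae h0] with y hy hy0
    rw [hmax y ⟨hy, hy0⟩, Real.zero_rpow (by linarith)]
    rfl
  rw [himg, csSup_singleton, hint, Real.zero_rpow (by positivity), hv0] at hle
  linarith
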